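/- Let n = bm where b is even and m is odd, and let L be a latin square of order n indexed by {0,...,n-1} such that ⌊L[i][j]/m⌋ ≡ ⌊i/m⌋ + ⌊j/m⌋ (mod b) for all i,j. Then L has no k-plex for any odd positive integer k. -/
import Mathlib


open scoped Classical

/-- A latin square of order `n`: each symbol occurs exactly once in each row and column. -/
def IsLatinSquare {n : ℕ} (L : Fin n → Fin n → Fin n) : Prop :=
  (∀ i, Function.Bijective fun j => L i j) ∧ (∀ j, Function.Bijective fun i => L i j)

/-- A `k`-plex of `L`: a set of cells with exactly `k` in each row, `k` in each column,
and each symbol occurring exactly `k` times. -/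
def IsPlex {n : ℕ} (L : Fin n → Fin n → Fin n) (k : ℕ) (K : Finset (Fin n × Fin n)) : Prop :=
  (∀ i, (K.filter fun p => p.1 = i).card = k) ∧
  (∀ j, (K.filter fun p => p.2 = j).card = k) ∧
  (∀ s, (K.filter fun p => L p.1 p.2 = s).card = k)

/-- `L` has a transversal, i.e. a `1`-plex. -/
def HasTransversal {n : ℕ} (L : Fin n → Fin n → Fin n) : Prop :=
  ∃ K, IsPlex L 1 K

lemma count_sum' {n : ℕ} {α : Type*} [AddCommMonoid α] (K : Finset (Fin n × Fin n))
    (g : Fin n × Fin n → Fin n) (k : ℕ)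
    (h : ∀ s, (K.filter fun p => g p = s).card = k) (F : Fin n → α) :
    ∑ p ∈ K, F (g p) = k • ∑ s, F s := by
  rw [← Finset.sum_fiberwise_of_maps_to (fun p _ => Finset.mem_univ (g p)) (fun p => F (g p)),
    Finset.smul_sum]
  refine Finset.sum_congr rfl fun s _ => ?_
  calc ∑ p ∈ K.filter (fun p => g p = s), F (g p)
      = ∑ p ∈ K.filter (fun p => g p = s), F s :=
        Finset.sum_congr rfl (fun p hp => by rw [(Finset.mem_filter.mp hp).2])
    _ = k • F s := by rw [Finset.sum_const, h]

lemma sumdiv' (m : ℕ) : ∀ b, 2 * ∑ i ∈ Finset.range (b * m), i / m = m * (b * (b - 1))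
  | 0 => by simp
  | (b + 1) => by
    have hrec := sumdiv' m b
    have hconst : ∀ j ∈ Finset.range m, (b * m + j) / m = b := by
      intro j hj
      have hj' : j < m := Finset.mem_range.mp hj
      have hm0 : 0 < m := Nat.pos_of_ne_zero (by omega)
      rw [Nat.add_comm, Nat.add_mul_div_right _ _ hm0, Nat.div_eq_of_lt hj', Nat.zero_add]
    have hsplit : ∑ i ∈ Finset.range ((b + 1) * m), i / m
        = (∑ i ∈ Finset.range (b * m), i / m) + m * b := by
      rw [add_mul, one_mul, Finset.sum_range_add, Finset.sum_congr rfl hconst,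
        Finset.sum_const, smul_eq_mul, Finset.card_range]
    rw [hsplit, Nat.add_sub_cancel, Nat.mul_add, hrec]
    cases b with
    | zero => simp
    | succ c =>
      rw [Nat.add_sub_cancel]
      ring

theorem stmt3 (b m n k : ℕ) (hb : Even b) (hbpos : 0 < b) (hm : Odd m)
    (hn : n = b * m) (L : Fin n → Fin n → Fin n) (hL : IsLatinSquare L)
    (hstep : ∀ i j : Fin n, (L i j : ℕ) / m ≡ (i : ℕ) / m + (j : ℕ) / m [MOD b])
    (hk : Odd k) :
    ¬ ∃ K, IsPlex L k K := by
  rintro ⟨K, hK1, hK2, hK3⟩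
  haveI : NeZero b := ⟨hbpos.ne'⟩
  set F : Fin n → ZMod b := fun s => (((s : ℕ) / m : ℕ) : ZMod b) with hF
  have hsym : ∑ p ∈ K, F (L p.1 p.2) = k • ∑ s, F s := count_sum' K _ k hK3 F
  have hrow : ∑ p ∈ K, F p.1 = k • ∑ s, F s := count_sum' K Prod.fst k hK1 F
  have hcol : ∑ p ∈ K, F p.2 = k • ∑ s, F s := count_sum' K Prod.snd k hK2 F
  have hstep' : ∀ p ∈ K, F (L p.1 p.2) = F p.1 + F p.2 := by
    intro p _
    have h1 := (ZMod.natCast_eq_natCast_iff _ _ _).mpr (hstep p.1 p.2)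
    simpa [hF, Nat.cast_add] using h1
  have key : (k • ∑ s, F s : ZMod b) = (k • ∑ s, F s) + (k • ∑ s, F s) :=
    calc (k • ∑ s, F s : ZMod b) = ∑ p ∈ K, F (L p.1 p.2) := hsym.symm
      _ = ∑ p ∈ K, (F p.1 + F p.2) := Finset.sum_congr rfl hstep'
      _ = (∑ p ∈ K, F p.1) + ∑ p ∈ K, F p.2 := Finset.sum_add_distrib
      _ = (k • ∑ s, F s) + (k • ∑ s, F s) := by rw [hrow, hcol]
  have hz : (k • ∑ s, F s : ZMod b) = 0 := (add_eq_left).mp key.symm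
  set T : ℕ := ∑ s : Fin n, (s : ℕ) / m with hT
  have hcast : ((k * T : ℕ) : ZMod b) = 0 := by
    rw [Nat.cast_mul, ← nsmul_eq_mul]
    rwa [show (∑ s, F s) = ((T : ℕ) : ZMod b) by rw [hT, Nat.cast_sum]] at hz
  have hdvd : b ∣ k * T := (ZMod.natCast_eq_zero_iff _ _).mp hcast
  have hT2 : 2 * T = m * (b * (b - 1)) := by
    rw [hT, Fin.sum_univ_eq_sum_range (fun i => i / m) n, hn]
    exact sumdiv' m b
  obtain ⟨t, ht⟩ := hdvd
  have hcancel : 2 * t = k * (m * (b - 1)) := by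
    have hb2 : b * (2 * t) = b * (k * (m * (b - 1))) := by
      calc b * (2 * t) = 2 * (b * t) := by ring
        _ = 2 * (k * T) := by rw [ht]
        _ = k * (2 * T) := by ring
        _ = k * (m * (b * (b - 1))) := by rw [hT2]
        _ = b * (k * (m * (b - 1))) := by ring
    exact Nat.eq_of_mul_eq_mul_left hbpos hb2
  have hodd : Odd (k * (m * (b - 1))) := by
    obtain ⟨c, hc⟩ := hb
    exact hk.mul (hm.mul ⟨c - 1, by omega⟩)
  rw [← hcancel] at hodd
  exact (Nat.not_odd_iff_even.mpr ⟨t, by ring⟩) hodd
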